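/- arXiv:1407.3939 — 2 statements merged into one kernel-verified Lean document; each statement's English description precedes it below -/
import Mathlib

section
/- In the BPRF coordinate chain, for every p ∈ ℕ and all coordinates i ≠ j ∈ {1,…,d}: E[(α_i^{(p)} − β_i^{(p)})(α_j^{(p)} − β_j^{(p)})] = (1 − 1/d)^p (2x_i − 1)(2x_j − 1). -/
open MeasureTheory ProbabilityTheory

/-- The BPRF coordinate chain: `bprfChain J U W x i p ω` is the pair
`(α_i^{(p)}, β_i^{(p)})` of distances from `x` to the two faces, in direction `i`,
of the cell containing `x` in the depth-`p` balanced purely random forest tree.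
(The variables `J p`, `U p`, `W p` drive the step from depth `p` to depth `p+1`.) -/
noncomputable def bprfChain {Ω : Type*} {d : ℕ} (J : ℕ → Ω → Fin d) (U W : ℕ → Ω → ℝ)
    (x : Fin d → ℝ) (i : Fin d) : ℕ → Ω → ℝ × ℝ
  | 0 => fun _ => (x i, 1 - x i)
  | p + 1 => fun ω =>
      let ab := bprfChain J U W x i p ω
      if J p ω = i then
        if W p ω * (ab.1 + ab.2) ≤ ab.1 then (U p ω * ab.1, ab.2)
        else (ab.1, U p ω * ab.2)
      else ab


section ChainAux

variable {d : ℕ}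

noncomputable def bprfChainAux (x : Fin d → ℝ) (i : Fin d) :
    ℕ → (ℕ → Fin d × ℝ × ℝ) → ℝ × ℝ
  | 0, _ => (x i, 1 - x i)
  | p + 1, f =>
      let ab := bprfChainAux x i p f
      if (f p).1 = i then
        if (f p).2.2 * (ab.1 + ab.2) ≤ ab.1 then ((f p).2.1 * ab.1, ab.2)
        else (ab.1, (f p).2.1 * ab.2)
      else ab

lemma bprfChainAux_congr (x : Fin d → ℝ) (i : Fin d) (p : ℕ)
    {f g : ℕ → Fin d × ℝ × ℝ} (h : ∀ q < p, f q = g q) :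
    bprfChainAux x i p f = bprfChainAux x i p g := by
  induction p with
  | zero => rfl
  | succ p ih =>
    have h1 : ∀ q < p, f q = g q := fun q hq => h q (Nat.lt_succ_of_lt hq)
    have h2 : f p = g p := h p (Nat.lt_succ_self p)
    simp only [bprfChainAux, ih h1, h2]

lemma bprfChain_eq_aux {Ω : Type*} (J : ℕ → Ω → Fin d) (U W : ℕ → Ω → ℝ)
    (x : Fin d → ℝ) (i : Fin d) (p : ℕ) (ω : Ω) :
    bprfChain J U W x i p ω = bprfChainAux x i p (fun q => (J q ω, U q ω, W q ω)) := by
  induction p with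
  | zero => rfl
  | succ p ih => simp only [bprfChain, bprfChainAux, ih]

lemma measurable_bprfChainAux (x : Fin d → ℝ) (i : Fin d) (p : ℕ) :
    Measurable (bprfChainAux x i p) := by
  induction p with
  | zero => exact measurable_const
  | succ p ih =>
    show Measurable fun f => (let ab := bprfChainAux x i p f; if (f p).1 = i then
        if (f p).2.2 * (ab.1 + ab.2) ≤ ab.1 then ((f p).2.1 * ab.1, ab.2)
        else (ab.1, (f p).2.1 * ab.2) else ab)
    simp only []
    have hp : Measurable fun f : ℕ → Fin d × ℝ × ℝ => f p := measurable_pi_apply p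
    have hJ : Measurable fun f : ℕ → Fin d × ℝ × ℝ => (f p).1 := hp.fst
    have hU : Measurable fun f : ℕ → Fin d × ℝ × ℝ => (f p).2.1 := hp.snd.fst
    have hW : Measurable fun f : ℕ → Fin d × ℝ × ℝ => (f p).2.2 := hp.snd.snd
    have h1 : Measurable fun f => (bprfChainAux x i p f).1 := ih.fst
    have h2 : Measurable fun f => (bprfChainAux x i p f).2 := ih.snd
    apply Measurable.ite (hJ (measurableSet_singleton i))
    · apply Measurable.ite (measurableSet_le (hW.mul (h1.add h2)) h1)
      · exact ((hU.mul h1).prodMk h2)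
      · exact (h1.prodMk (hU.mul h2))
    · exact ih

lemma bprfChainAux_mem (x : Fin d → ℝ) (i : Fin d) (hx : x i ∈ Set.Ico (0:ℝ) 1)
    (p : ℕ) {f : ℕ → Fin d × ℝ × ℝ} (hf : ∀ q < p, (f q).2.1 ∈ Set.Icc (0:ℝ) 1) :
    (bprfChainAux x i p f).1 ∈ Set.Icc (0:ℝ) 1 ∧ (bprfChainAux x i p f).2 ∈ Set.Icc (0:ℝ) 1 := by
  induction p with
  | zero =>
    simp only [bprfChainAux]
    exact ⟨⟨hx.1, hx.2.le⟩, ⟨by linarith [hx.2], by linarith [hx.1]⟩⟩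
  | succ p ih =>
    have hf' : ∀ q < p, (f q).2.1 ∈ Set.Icc (0:ℝ) 1 := fun q hq => hf q (Nat.lt_succ_of_lt hq)
    obtain ⟨⟨ha0, ha1⟩, hb0, hb1⟩ := ih hf'
    have hu := hf p (Nat.lt_succ_self p)
    simp only [bprfChainAux]
    split_ifs
    · exact ⟨⟨mul_nonneg hu.1 ha0, mul_le_one₀ hu.2 ha0 ha1⟩, ⟨hb0, hb1⟩⟩
    · exact ⟨⟨ha0, ha1⟩, ⟨mul_nonneg hu.1 hb0, mul_le_one₀ hu.2 hb0 hb1⟩⟩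
    · exact ⟨⟨ha0, ha1⟩, ⟨hb0, hb1⟩⟩

end ChainAux


noncomputable def leb01 : Measure ℝ := (volume : Measure ℝ).restrict (Set.Icc 0 1)

instance : IsProbabilityMeasure leb01 := by
  constructor
  rw [leb01, Measure.restrict_apply_univ, Real.volume_Icc]
  norm_num

lemma integral_id_leb01 : ∫ u, u ∂leb01 = 1 / 2 := by
  rw [leb01]
  rw [MeasureTheory.integral_Icc_eq_integral_Ioc, ← intervalIntegral.integral_of_le zero_le_one]
  simpa using integral_id (a := (0:ℝ)) (b := 1)

lemma integrable_id_leb01 : Integrable (fun u : ℝ => u) leb01 := by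
  refine (integrable_const (1:ℝ)).mono' measurable_id.aestronglyMeasurable ?_
  rw [leb01]
  filter_upwards [ae_restrict_mem measurableSet_Icc] with u hu
  rw [Real.norm_eq_abs, abs_le]
  exact ⟨by linarith [hu.1], hu.2⟩

lemma integral_ite_leb01 (c : ℝ → Prop) [DecidablePred c] (hS : MeasurableSet {w | c w}) (P Q : ℝ) :
    ∫ w, (if c w then P else Q) ∂leb01
      = (leb01 {w | c w}).toReal * P + (1 - (leb01 {w | c w}).toReal) * Q := by
  have heq : (fun w => if c w then P else Q)
      = fun w => {w | c w}.indicator (fun _ => P - Q) w + Q := by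
    funext w
    by_cases h : c w
    · simp [Set.indicator_of_mem, h, Set.mem_setOf_eq]
    · simp [Set.indicator_of_notMem, h, Set.mem_setOf_eq]
  rw [heq, integral_add ((integrable_const (P - Q)).indicator hS) (integrable_const Q),
    integral_indicator_const _ hS, integral_const]
  simp [measure_univ]
  unfold Measure.real
  ring

lemma leb01_le_set (a b : ℝ) (ha : 0 ≤ a) (hb : 0 ≤ b) (hs : 0 < a + b) :
    (leb01 {w : ℝ | w * (a + b) ≤ a}).toReal = a / (a + b) := by
  have hset : {w : ℝ | w * (a + b) ≤ a} = Set.Iic (a / (a + b)) := by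
    ext w
    simp [Set.mem_setOf_eq, Set.mem_Iic, le_div_iff₀ hs]
  have hle1 : a / (a + b) ≤ 1 := by
    rw [div_le_one hs]; linarith
  have h0 : 0 ≤ a / (a + b) := div_nonneg ha hs.le
  rw [hset, leb01, Measure.restrict_apply measurableSet_Iic]
  have : Set.Iic (a / (a + b)) ∩ Set.Icc 0 1 = Set.Icc 0 (a / (a + b)) := by
    ext w
    simp only [Set.mem_inter_iff, Set.mem_Iic, Set.mem_Icc]
    constructor
    · rintro ⟨h1, h2, h3⟩; exact ⟨h2, h1⟩
    · rintro ⟨h1, h2⟩; exact ⟨h2, h1, h2.trans hle1⟩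
  rw [this, Real.volume_Icc, ENNReal.toReal_ofReal (by linarith)]
  ring

/-- The inner `(u,w)`-integral for a split in the active coordinate. -/
lemma bprf_inner_integral (a b : ℝ) (ha : 0 ≤ a) (hb : 0 ≤ b) :
    ∫ z : ℝ × ℝ, (if z.2 * (a + b) ≤ a then z.1 * a - b else a - z.1 * b)
      ∂(leb01.prod leb01) = (a - b) / 2 := by
  have hmeas : Measurable fun z : ℝ × ℝ =>
      (if z.2 * (a + b) ≤ a then z.1 * a - b else a - z.1 * b) := by
    apply Measurable.ite (measurableSet_le (measurable_snd.mul_const _) measurable_const)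
    · exact (measurable_fst.mul_const _).sub measurable_const
    · exact measurable_const.sub (measurable_fst.mul_const _)
  have hae : ∀ᵐ z : ℝ × ℝ ∂(leb01.prod leb01), z.1 ∈ Set.Icc (0:ℝ) 1 := by
    rw [ae_iff]
    have : {z : ℝ × ℝ | ¬ z.1 ∈ Set.Icc (0:ℝ) 1} = (Set.Icc (0:ℝ) 1)ᶜ ×ˢ Set.univ := by
      ext z; simp [Set.mem_prod]
    rw [this, Measure.prod_prod]
    have : leb01 (Set.Icc (0:ℝ) 1)ᶜ = 0 := by
      rw [leb01, Measure.restrict_apply (measurableSet_Icc.compl)]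
      simp
    simp [this]
  have hint : Integrable (fun z : ℝ × ℝ =>
      (if z.2 * (a + b) ≤ a then z.1 * a - b else a - z.1 * b)) (leb01.prod leb01) := by
    refine (integrable_const (a + b)).mono' hmeas.aestronglyMeasurable ?_
    filter_upwards [hae] with z hz
    rw [Real.norm_eq_abs, abs_le]
    constructor <;> split_ifs <;> nlinarith [hz.1, hz.2]
  rw [MeasureTheory.integral_prod _ hint]
  have hSmeas : MeasurableSet {w : ℝ | w * (a + b) ≤ a} :=
    measurableSet_le (measurable_id.mul_const _) measurable_const
  by_cases hz : a + b = 0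
  · have ha0 : a = 0 := by linarith
    have hb0 : b = 0 := by linarith
    simp [ha0, hb0]
  · have hs : 0 < a + b := lt_of_le_of_ne (by linarith) (Ne.symm hz)
    have hm := leb01_le_set a b ha hb hs
    set m : ℝ := a / (a + b) with hmdef
    have hinner : ∀ u : ℝ, (∫ w, (if w * (a + b) ≤ a then u * a - b else a - u * b) ∂leb01)
        = m * (u * a - b) + (1 - m) * (a - u * b) := by
      intro u
      have := integral_ite_leb01 (fun w => w * (a + b) ≤ a) hSmeas (u * a - b) (a - u * b)
      rw [hm] at this
      exact this
    have hout : (fun u : ℝ => ∫ w, (if w * (a + b) ≤ a then u * a - b else a - u * b) ∂leb01)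
        = fun u : ℝ => (m * a - (1 - m) * b) * u + ((1 - m) * a - m * b) := by
      funext u; rw [hinner u]; ring
    calc ∫ u, ∫ w, (if w * (a + b) ≤ a then u * a - b else a - u * b) ∂leb01 ∂leb01
        = ∫ u, ((m * a - (1 - m) * b) * u + ((1 - m) * a - m * b)) ∂leb01 := by rw [hout]
      _ = (m * a - (1 - m) * b) * (1/2) + ((1 - m) * a - m * b) := by
          rw [integral_add (integrable_id_leb01.const_mul _) (integrable_const _),
            integral_const_mul, integral_id_leb01, integral_const]
          simp [measure_univ]
      _ = (a - b) / 2 := by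
          rw [hmdef]; field_simp; ring

noncomputable def bprfH {d : ℕ} (i : Fin d) (y : ℝ × ℝ) (z : Fin d × ℝ × ℝ) : ℝ :=
  if z.1 = i then
    (if z.2.2 * (y.1 + y.2) ≤ y.1 then z.2.1 * y.1 - y.2 else y.1 - z.2.1 * y.2)
  else y.1 - y.2

lemma measurable_bprfH {d : ℕ} (i : Fin d) (y : ℝ × ℝ) : Measurable (bprfH i y) := by
  unfold bprfH
  apply Measurable.ite (measurable_fst (measurableSet_singleton i))
  · apply Measurable.ite
      (measurableSet_le (measurable_snd.snd.mul_const _) measurable_const)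
    · exact (measurable_snd.fst.mul_const _).sub measurable_const
    · exact measurable_const.sub (measurable_snd.fst.mul_const _)
  · exact measurable_const

lemma abs_bprfH_le {d : ℕ} (i : Fin d) {y : ℝ × ℝ} {z : Fin d × ℝ × ℝ}
    (hy1 : y.1 ∈ Set.Icc (0:ℝ) 1) (hy2 : y.2 ∈ Set.Icc (0:ℝ) 1)
    (hu : z.2.1 ∈ Set.Icc (0:ℝ) 1) : |bprfH i y z| ≤ 2 := by
  unfold bprfH
  obtain ⟨h1, h2⟩ := hy1; obtain ⟨h3, h4⟩ := hy2; obtain ⟨h5, h6⟩ := hu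
  rw [abs_le]
  constructor <;> split_ifs <;> nlinarith

lemma bprf_step_integral {d : ℕ} (hd : 1 ≤ d) (i j : Fin d) (hij : i ≠ j)
    (y1 y2 : ℝ × ℝ)
    (h11 : y1.1 ∈ Set.Icc (0:ℝ) 1) (h12 : y1.2 ∈ Set.Icc (0:ℝ) 1)
    (h21 : y2.1 ∈ Set.Icc (0:ℝ) 1) (h22 : y2.2 ∈ Set.Icc (0:ℝ) 1) :
    ∫ z : Fin d × ℝ × ℝ, bprfH i y1 z * bprfH j y2 z
        ∂(((d : ENNReal)⁻¹ • (Measure.count : Measure (Fin d))).prod (leb01.prod leb01))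
      = (1 - 1 / (d : ℝ)) * ((y1.1 - y1.2) * (y2.1 - y2.2)) := by
  have hd0 : (d : ENNReal) ≠ 0 := by
    exact_mod_cast Nat.cast_ne_zero.mpr (by omega)
  have hdR : (d : ℝ) ≠ 0 := by positivity
  set μd : Measure (Fin d) := (d : ENNReal)⁻¹ • Measure.count with hμd
  have hμdprob : IsProbabilityMeasure μd := by
    constructor
    rw [hμd, Measure.smul_apply, Measure.count_univ, smul_eq_mul, ENat.card_eq_coe_fintype_card, ENat.toENNReal_coe, Fintype.card_fin]
    exact ENNReal.inv_mul_cancel hd0 (ENNReal.natCast_ne_top d)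
  -- a.e. bound for integrability
  have hmeas : Measurable fun z : Fin d × ℝ × ℝ => bprfH i y1 z * bprfH j y2 z :=
    (measurable_bprfH i y1).mul (measurable_bprfH j y2)
  have hae : ∀ᵐ z : Fin d × ℝ × ℝ ∂(μd.prod (leb01.prod leb01)),
      z.2.1 ∈ Set.Icc (0:ℝ) 1 := by
    rw [ae_iff]
    have hset : {z : Fin d × ℝ × ℝ | ¬ z.2.1 ∈ Set.Icc (0:ℝ) 1}
        = (Set.univ : Set (Fin d)) ×ˢ ((Set.Icc (0:ℝ) 1)ᶜ ×ˢ (Set.univ : Set ℝ)) := by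
      ext z; simp [Set.mem_prod]
    have hleb : leb01 (Set.Icc (0:ℝ) 1)ᶜ = 0 := by
      rw [leb01, Measure.restrict_apply measurableSet_Icc.compl]; simp
    rw [hset, Measure.prod_prod, Measure.prod_prod, hleb]
    simp
  have hint : Integrable (fun z : Fin d × ℝ × ℝ => bprfH i y1 z * bprfH j y2 z)
      (μd.prod (leb01.prod leb01)) := by
    refine (integrable_const (4:ℝ)).mono' hmeas.aestronglyMeasurable ?_
    filter_upwards [hae] with z hz
    rw [Real.norm_eq_abs, abs_mul]
    calc |bprfH i y1 z| * |bprfH j y2 z| ≤ 2 * 2 := by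
          exact mul_le_mul (abs_bprfH_le i h11 h12 hz) (abs_bprfH_le j h21 h22 hz)
            (abs_nonneg _) (by norm_num)
      _ = 4 := by norm_num
  rw [MeasureTheory.integral_prod _ hint]
  set A : ℝ := ((y1.1 - y1.2) / 2) * (y2.1 - y2.2) with hA
  set B : ℝ := (y1.1 - y1.2) * ((y2.1 - y2.2) / 2) with hB
  set C : ℝ := (y1.1 - y1.2) * (y2.1 - y2.2) with hC
  have hg : (fun k : Fin d => ∫ z' : ℝ × ℝ, bprfH i y1 (k, z') * bprfH j y2 (k, z')
      ∂(leb01.prod leb01)) = fun k => if k = i then A else if k = j then B else C := by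
    funext k
    by_cases hki : k = i
    · rw [if_pos hki]
      have hkj : ¬ k = j := by rw [hki]; exact hij
      have : (fun z' : ℝ × ℝ => bprfH i y1 (k, z') * bprfH j y2 (k, z'))
          = fun z' : ℝ × ℝ => (if z'.2 * (y1.1 + y1.2) ≤ y1.1 then z'.1 * y1.1 - y1.2
              else y1.1 - z'.1 * y1.2) * (y2.1 - y2.2) := by
        funext z'; simp [bprfH, hki, hkj, hij]
      rw [this, integral_mul_const, bprf_inner_integral y1.1 y1.2 h11.1 h12.1, hA]
    · rw [if_neg hki]
      by_cases hkj : k = j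
      · rw [if_pos hkj]
        have : (fun z' : ℝ × ℝ => bprfH i y1 (k, z') * bprfH j y2 (k, z'))
            = fun z' : ℝ × ℝ => (y1.1 - y1.2) * (if z'.2 * (y2.1 + y2.2) ≤ y2.1
                then z'.1 * y2.1 - y2.2 else y2.1 - z'.1 * y2.2) := by
          funext z'; simp [bprfH, hki, hkj, hij.symm]
        rw [this, integral_const_mul, bprf_inner_integral y2.1 y2.2 h21.1 h22.1, hB]
      · rw [if_neg hkj]
        have : (fun z' : ℝ × ℝ => bprfH i y1 (k, z') * bprfH j y2 (k, z'))
            = fun _ : ℝ × ℝ => C := by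
          funext z'; simp [bprfH, hki, hkj, hC]
        rw [this, integral_const]
        simp [measure_univ]
  rw [hg, hμd, integral_smul_measure, MeasureTheory.integral_fintype Integrable.of_finite]
  simp only [MeasureTheory.count_real_singleton, one_smul]
  have hsum : ∑ k : Fin d, (if k = i then A else if k = j then B else C)
      = (d : ℝ) * C + (A - C) + (B - C) := by
    have hterm : ∀ k : Fin d, (if k = i then A else if k = j then B else C)
        = C + (if k = i then A - C else 0) + (if k = j then B - C else 0) := by
      intro k
      by_cases hki : k = i
      · subst hki; rw [if_pos rfl, if_pos rfl, if_neg hij]; ring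
      · rw [if_neg hki, if_neg hki]
        by_cases hkj : k = j
        · subst hkj; rw [if_pos rfl, if_pos rfl]; ring
        · rw [if_neg hkj, if_neg hkj]; ring
    rw [Finset.sum_congr rfl fun k _ => hterm k]
    rw [Finset.sum_add_distrib, Finset.sum_add_distrib, Finset.sum_const,
      Finset.sum_ite_eq' Finset.univ i (fun _ => A - C),
      Finset.sum_ite_eq' Finset.univ j (fun _ => B - C)]
    simp [Finset.card_univ]
  have hcast : ((d : ENNReal)).toReal = (d : ℝ) := by simp
  rw [hsum, ENNReal.toReal_inv, hcast, smul_eq_mul, hA, hB, hC]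
  field_simp
  ring

lemma measurable_bprfH_uncurry {d : ℕ} (i : Fin d) :
    Measurable (fun q : (ℝ × ℝ) × (Fin d × ℝ × ℝ) => bprfH i q.1 q.2) := by
  unfold bprfH
  apply Measurable.ite (measurable_snd.fst (measurableSet_singleton i))
  · apply Measurable.ite
      (measurableSet_le (measurable_snd.snd.snd.mul (measurable_fst.fst.add measurable_fst.snd))
        measurable_fst.fst)
    · exact (measurable_snd.snd.fst.mul measurable_fst.fst).sub measurable_fst.snd
    · exact measurable_fst.fst.sub (measurable_snd.snd.fst.mul measurable_fst.snd)
  · exact measurable_fst.fst.sub measurable_fst.snd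


/-- **Bi-dimensional moments of the BPRF coordinate chain (Proposition 16 of the paper).**
With `(J_p)`, `(U_p)`, `(W_p)` independent, `J_p` uniform on `{1,…,d}` and `U_p`, `W_p`
uniform on `[0,1]`, for every depth `p` and distinct coordinates `i ≠ j`:
`E[(α_i^{(p)} − β_i^{(p)})(α_j^{(p)} − β_j^{(p)})] = (1 − 1/d)^p (2x_i − 1)(2x_j − 1)`. -/
theorem bprf_chain_cross_moments
    {Ω : Type*} [MeasureSpace Ω] [IsProbabilityMeasure (ℙ : Measure Ω)]
    (d : ℕ) (hd : 1 ≤ d)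
    (x : Fin d → ℝ) (hx : ∀ i, x i ∈ Set.Ico (0 : ℝ) 1)
    (J : ℕ → Ω → Fin d) (U W : ℕ → Ω → ℝ)
    (hJ : ∀ p, Measurable (J p)) (hU : ∀ p, Measurable (U p)) (hW : ∀ p, Measurable (W p))
    (h_indep : iIndepFun
        (fun p ω => (J p ω, U p ω, W p ω)) ℙ)
    (h_dist : ∀ p, Measure.map (fun ω => (J p ω, U p ω, W p ω)) ℙ
        = (((d : ENNReal)⁻¹ • (Measure.count : Measure (Fin d))).prod
            ((((volume : Measure ℝ).restrict (Set.Icc 0 1))).prod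
              ((volume : Measure ℝ).restrict (Set.Icc 0 1))))) :
    ∀ p : ℕ, ∀ i j : Fin d, i ≠ j →
      (∫ ω : Ω, ((bprfChain J U W x i p ω).1 - (bprfChain J U W x i p ω).2)
          * ((bprfChain J U W x j p ω).1 - (bprfChain J U W x j p ω).2))
        = (1 - 1 / (d : ℝ)) ^ p * (2 * x i - 1) * (2 * x j - 1) := by
  classical
  haveI : NeZero d := ⟨by omega⟩
  set ν : Measure (Fin d × ℝ × ℝ) :=
    ((d : ENNReal)⁻¹ • (Measure.count : Measure (Fin d))).prod (leb01.prod leb01) with hνdef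
  have hνeq : ∀ p, Measure.map (fun ω => (J p ω, U p ω, W p ω)) ℙ = ν := fun p => h_dist p
  set X : ℕ → Ω → Fin d × ℝ × ℝ := fun q ω => (J q ω, U q ω, W q ω) with hXdef
  have hXm : ∀ q, Measurable (X q) := fun q => (hJ q).prodMk ((hU q).prodMk (hW q))
  have hleb_compl : leb01 (Set.Icc (0:ℝ) 1)ᶜ = 0 := by
    rw [leb01, Measure.restrict_apply measurableSet_Icc.compl]; simp
  -- almost surely, all U q lie in [0,1]
  have hgood : ∀ᵐ ω ∂(ℙ : Measure Ω), ∀ q, U q ω ∈ Set.Icc (0:ℝ) 1 := by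
    rw [ae_all_iff]
    intro q
    rw [ae_iff]
    have hset : {ω | ¬ U q ω ∈ Set.Icc (0:ℝ) 1}
        = X q ⁻¹' (Set.univ ×ˢ ((Set.Icc (0:ℝ) 1)ᶜ ×ˢ Set.univ)) := by
      ext ω; simp [hXdef]
    have hms : MeasurableSet ((Set.univ : Set (Fin d)) ×ˢ
        ((Set.Icc (0:ℝ) 1)ᶜ ×ˢ (Set.univ : Set ℝ))) :=
      MeasurableSet.univ.prod (measurableSet_Icc.compl.prod MeasurableSet.univ)
    rw [hset, ← Measure.map_apply (hXm q) hms, hνeq q, hνdef,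
      Measure.prod_prod, Measure.prod_prod, hleb_compl]
    simp
  -- chain measurability and bounds
  have hchain_eq : ∀ (k : Fin d) (p : ℕ) (ω : Ω),
      bprfChain J U W x k p ω = bprfChainAux x k p (fun q => X q ω) := fun k p ω =>
    bprfChain_eq_aux J U W x k p ω
  have hchainm : ∀ (k : Fin d) (p : ℕ), Measurable (bprfChain J U W x k p) := by
    intro k p
    have : bprfChain J U W x k p = fun ω => bprfChainAux x k p (fun q => X q ω) :=
      funext fun ω => hchain_eq k p ω
    rw [this]
    exact (measurable_bprfChainAux x k p).comp (measurable_pi_lambda _ hXm)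
  have hbound : ∀ (k : Fin d) (p : ℕ), ∀ᵐ ω ∂(ℙ : Measure Ω),
      (bprfChain J U W x k p ω).1 ∈ Set.Icc (0:ℝ) 1
        ∧ (bprfChain J U W x k p ω).2 ∈ Set.Icc (0:ℝ) 1 := by
    intro k p
    filter_upwards [hgood] with ω hω
    rw [hchain_eq k p ω]
    exact bprfChainAux_mem x k (hx k) p (fun q _ => hω q)
  intro p
  induction p with
  | zero =>
    intro i j hij
    simp only [bprfChain, integral_const, measure_univ, probReal_univ, ENNReal.toReal_one, one_smul, smul_eq_mul]
    ring
  | succ p ih =>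
    intro i j hij
    set Yp : Ω → (ℝ × ℝ) × (ℝ × ℝ) :=
      fun ω => (bprfChain J U W x i p ω, bprfChain J U W x j p ω) with hYdef
    have hYm : Measurable Yp := (hchainm i p).prodMk (hchainm j p)
    -- independence of Yp and X p
    have hindep : IndepFun Yp (X p) ℙ := by
      have hdisj : Disjoint (Finset.range p) ({p} : Finset ℕ) := by
        simp [Finset.disjoint_singleton_right]
      have hbase := h_indep.indepFun_finset (Finset.range p) {p} hdisj hXm
      have hext : Measurable (fun (f : ↥(Finset.range p) → Fin d × ℝ × ℝ) (q : ℕ) =>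
          if h : q ∈ Finset.range p then f ⟨q, h⟩ else default) := by
        apply measurable_pi_lambda
        intro q
        by_cases h : q ∈ Finset.range p
        · simp only [dif_pos h]; exact measurable_pi_apply _
        · simp only [dif_neg h]; exact measurable_const
      have hφ : Measurable (fun (f : ↥(Finset.range p) → Fin d × ℝ × ℝ) =>
          (bprfChainAux x i p (fun q => if h : q ∈ Finset.range p then f ⟨q, h⟩ else default),
           bprfChainAux x j p (fun q => if h : q ∈ Finset.range p then f ⟨q, h⟩ else default))) :=
        ((measurable_bprfChainAux x i p).comp hext).prodMk
          ((measurable_bprfChainAux x j p).comp hext)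
      have hψ : Measurable (fun f : (↥({p} : Finset ℕ) → Fin d × ℝ × ℝ) =>
          f ⟨p, Finset.mem_singleton_self p⟩) := measurable_pi_apply _
      have h2 := hbase.comp hφ hψ
      have hYeq : Yp = (fun (f : ↥(Finset.range p) → Fin d × ℝ × ℝ) =>
          (bprfChainAux x i p (fun q => if h : q ∈ Finset.range p then f ⟨q, h⟩ else default),
           bprfChainAux x j p (fun q => if h : q ∈ Finset.range p then f ⟨q, h⟩ else default)))
          ∘ (fun ω (q : ↥(Finset.range p)) => X (↑q) ω) := by
        funext ω
        simp only [Function.comp, hYdef]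
        congr 1 <;> rw [hchain_eq _ p ω] <;>
          exact bprfChainAux_congr x _ p
            (fun q hq => by have h := Finset.mem_range.mpr hq; simp [h])
      rw [hYeq]
      exact h2
    -- push the integral to the product measure
    have hprod : Measure.map (fun ω => (Yp ω, X p ω)) ℙ = (Measure.map Yp ℙ).prod ν := by
      rw [← hνeq p]
      exact (indepFun_iff_map_prod_eq_prod_map_map hYm.aemeasurable
        (hXm p).aemeasurable).mp hindep
    have hFm : Measurable (fun q : ((ℝ × ℝ) × (ℝ × ℝ)) × (Fin d × ℝ × ℝ) =>
        bprfH i q.1.1 q.2 * bprfH j q.1.2 q.2) :=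
      ((measurable_bprfH_uncurry i).comp ((measurable_fst.fst).prodMk measurable_snd)).mul
        ((measurable_bprfH_uncurry j).comp ((measurable_fst.snd).prodMk measurable_snd))
    -- the box and its a.e. properties
    set Box : Set ((ℝ × ℝ) × (ℝ × ℝ)) := {y | y.1.1 ∈ Set.Icc (0:ℝ) 1
      ∧ y.1.2 ∈ Set.Icc (0:ℝ) 1 ∧ y.2.1 ∈ Set.Icc (0:ℝ) 1 ∧ y.2.2 ∈ Set.Icc (0:ℝ) 1}
      with hBoxdef
    have hBoxm : MeasurableSet Box := by
      have : Box = ((fun y : (ℝ × ℝ) × (ℝ × ℝ) => y.1.1) ⁻¹' Set.Icc 0 1)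
          ∩ (((fun y : (ℝ × ℝ) × (ℝ × ℝ) => y.1.2) ⁻¹' Set.Icc 0 1)
          ∩ (((fun y : (ℝ × ℝ) × (ℝ × ℝ) => y.2.1) ⁻¹' Set.Icc 0 1)
          ∩ ((fun y : (ℝ × ℝ) × (ℝ × ℝ) => y.2.2) ⁻¹' Set.Icc 0 1))) := by
        ext y; simp [hBoxdef, and_assoc]
      rw [this]
      exact (measurable_fst.fst measurableSet_Icc).inter
        ((measurable_fst.snd measurableSet_Icc).inter
          ((measurable_snd.fst measurableSet_Icc).inter
            (measurable_snd.snd measurableSet_Icc)))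
    have hYbox : ∀ᵐ y ∂(Measure.map Yp ℙ), y ∈ Box := by
      refine (MeasureTheory.ae_map_iff hYm.aemeasurable hBoxm).mpr ?_
      filter_upwards [hbound i p, hbound j p] with ω h1 h2
      exact ⟨h1.1, h1.2, h2.1, h2.2⟩
    have hνU : ν {z : Fin d × ℝ × ℝ | ¬ z.2.1 ∈ Set.Icc (0:ℝ) 1} = 0 := by
      have : {z : Fin d × ℝ × ℝ | ¬ z.2.1 ∈ Set.Icc (0:ℝ) 1}
          = (Set.univ : Set (Fin d)) ×ˢ ((Set.Icc (0:ℝ) 1)ᶜ ×ˢ (Set.univ : Set ℝ)) := by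
        ext z; simp
      rw [this, hνdef, Measure.prod_prod, Measure.prod_prod, hleb_compl]
      simp
    have haeprod : ∀ᵐ q ∂((Measure.map Yp ℙ).prod ν),
        q.1 ∈ Box ∧ q.2.2.1 ∈ Set.Icc (0:ℝ) 1 := by
      rw [ae_iff]
      have hYc : (Measure.map Yp ℙ) Boxᶜ = 0 := ae_iff.mp hYbox
      have hsub : {q : ((ℝ × ℝ) × (ℝ × ℝ)) × (Fin d × ℝ × ℝ) |
            ¬ (q.1 ∈ Box ∧ q.2.2.1 ∈ Set.Icc (0:ℝ) 1)}
          ⊆ (Boxᶜ ×ˢ (Set.univ : Set (Fin d × ℝ × ℝ)))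
            ∪ ((Set.univ : Set ((ℝ × ℝ) × (ℝ × ℝ))) ×ˢ
              {z : Fin d × ℝ × ℝ | ¬ z.2.1 ∈ Set.Icc (0:ℝ) 1}) := by
        intro q hq
        simp only [Set.mem_setOf_eq, not_and_or] at hq
        rcases hq with hq | hq
        · exact Or.inl ⟨hq, trivial⟩
        · exact Or.inr ⟨trivial, hq⟩
      refine measure_mono_null hsub (measure_union_null ?_ ?_)
      · rw [Measure.prod_prod, hYc, zero_mul]
      · rw [Measure.prod_prod, hνU, mul_zero]
    have hPcount : IsProbabilityMeasure ((d : ENNReal)⁻¹ • (Measure.count : Measure (Fin d))) := by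
      constructor
      rw [Measure.smul_apply, Measure.count_univ, smul_eq_mul, ENat.card_eq_coe_fintype_card, ENat.toENNReal_coe, Fintype.card_fin]
      exact ENNReal.inv_mul_cancel (Nat.cast_ne_zero.mpr (by omega)) (ENNReal.natCast_ne_top d)
    haveI := hPcount
    haveI hνP : IsProbabilityMeasure ν := by rw [hνdef]; infer_instance
    haveI hYP : IsProbabilityMeasure (Measure.map Yp ℙ) :=
      Measure.isProbabilityMeasure_map hYm.aemeasurable
    have hintF : Integrable (fun q : ((ℝ × ℝ) × (ℝ × ℝ)) × (Fin d × ℝ × ℝ) =>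
        bprfH i q.1.1 q.2 * bprfH j q.1.2 q.2) ((Measure.map Yp ℙ).prod ν) := by
      refine (integrable_const (4:ℝ)).mono' hFm.aestronglyMeasurable ?_
      filter_upwards [haeprod] with q hq
      have hbox := hq.1
      simp only [hBoxdef, Set.mem_setOf_eq] at hbox
      obtain ⟨ha, hb, hc, he⟩ := hbox
      rw [Real.norm_eq_abs, abs_mul]
      calc |bprfH i q.1.1 q.2| * |bprfH j q.1.2 q.2| ≤ 2 * 2 :=
            mul_le_mul (abs_bprfH_le i ha hb hq.2)
              (abs_bprfH_le j hc he hq.2) (abs_nonneg _) (by norm_num)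
        _ = 4 := by norm_num
    -- the pointwise step identity
    have hstep : ∀ ω : Ω, ((bprfChain J U W x i (p+1) ω).1 - (bprfChain J U W x i (p+1) ω).2)
        * ((bprfChain J U W x j (p+1) ω).1 - (bprfChain J U W x j (p+1) ω).2)
        = bprfH i (Yp ω).1 (X p ω) * bprfH j (Yp ω).2 (X p ω) := by
      intro ω
      have hk : ∀ k : Fin d, (bprfChain J U W x k (p+1) ω).1
          - (bprfChain J U W x k (p+1) ω).2
          = bprfH k (bprfChain J U W x k p ω) (X p ω) := by
        intro k
        simp only [bprfChain, bprfH, hXdef]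
        split_ifs <;> simp
      rw [hk i, hk j]
    have hgm : Measurable (fun y : (ℝ × ℝ) × (ℝ × ℝ) => (y.1.1 - y.1.2) * (y.2.1 - y.2.2)) :=
      ((measurable_fst.fst.sub measurable_fst.snd).mul
        (measurable_snd.fst.sub measurable_snd.snd))
    calc (∫ ω : Ω, ((bprfChain J U W x i (p+1) ω).1 - (bprfChain J U W x i (p+1) ω).2)
          * ((bprfChain J U W x j (p+1) ω).1 - (bprfChain J U W x j (p+1) ω).2))
        = ∫ ω : Ω, bprfH i (Yp ω).1 (X p ω) * bprfH j (Yp ω).2 (X p ω) := by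
          exact integral_congr_ae (Filter.Eventually.of_forall hstep)
      _ = ∫ q, bprfH i q.1.1 q.2 * bprfH j q.1.2 q.2
            ∂(Measure.map (fun ω => (Yp ω, X p ω)) ℙ) := by
          rw [integral_map (hYm.prodMk (hXm p)).aemeasurable hFm.aestronglyMeasurable]
      _ = ∫ q, bprfH i q.1.1 q.2 * bprfH j q.1.2 q.2 ∂((Measure.map Yp ℙ).prod ν) := by
          rw [hprod]
      _ = ∫ y, (∫ z, bprfH i y.1 z * bprfH j y.2 z ∂ν) ∂(Measure.map Yp ℙ) := by
          rw [MeasureTheory.integral_prod _ hintF]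
      _ = ∫ y, (1 - 1 / (d:ℝ)) * ((y.1.1 - y.1.2) * (y.2.1 - y.2.2)) ∂(Measure.map Yp ℙ) := by
          apply integral_congr_ae
          filter_upwards [hYbox] with y hy
          simp only [hBoxdef, Set.mem_setOf_eq] at hy
          exact bprf_step_integral hd i j hij y.1 y.2 hy.1 hy.2.1 hy.2.2.1 hy.2.2.2
      _ = (1 - 1 / (d:ℝ)) * ∫ y, (y.1.1 - y.1.2) * (y.2.1 - y.2.2) ∂(Measure.map Yp ℙ) :=
          integral_const_mul _ _
      _ = (1 - 1 / (d:ℝ)) * ∫ ω : Ω, ((bprfChain J U W x i p ω).1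
            - (bprfChain J U W x i p ω).2)
            * ((bprfChain J U W x j p ω).1 - (bprfChain J U W x j p ω).2) := by
          rw [integral_map hYm.aemeasurable hgm.aestronglyMeasurable]
      _ = (1 - 1 / (d:ℝ)) ^ (p+1) * (2 * x i - 1) * (2 * x j - 1) := by
          rw [ih i j hij]; ring
end

section
/- Let p ≥ 1 be an integer, Z₁, …, Z_p be i.i.d. random variables uniformly distributed on [0,1], and V_p = Z₁ Z₂ ⋯ Z_p. Then: (i) for every u > 0, P(V_p ≤ exp(−p − √(up))) ≤ 1/u; (ii) for every n ≥ 1 and every u > 0, E[exp(−n V_p)] ≤ 1/u + (1 − 1/u) exp(−n exp(−(p + √(up)))); and (iii) if n ≥ exp(p + √(5p)), then E[exp(−n V_p)] ≤ (1 + 4e^{−1})/5 < 1/2. -/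
open MeasureTheory Real

namespace BPRFAux

open Set

noncomputable def μ01 : Measure ℝ := (volume : Measure ℝ).restrict (Set.Icc 0 1)

instance : IsProbabilityMeasure μ01 := ⟨by simp [μ01, Real.volume_Icc]⟩

noncomputable def φ (x : ℝ) : ℝ := -Real.log x - 1

lemma expNegImage : (fun t : ℝ => Real.exp (-t)) '' Set.Ioi 0 = Set.Ioo 0 1 := by
  ext x
  constructor
  · rintro ⟨t, ht, rfl⟩
    have ht' : (0:ℝ) < t := ht
    exact ⟨Real.exp_pos _, by rw [Real.exp_lt_one_iff]; linarith⟩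
  · rintro ⟨hx0, hx1⟩
    exact ⟨-Real.log x, by simpa using Real.log_neg hx0 hx1, by simp [Real.exp_log hx0]⟩

lemma expNegDeriv : ∀ t ∈ Set.Ioi (0:ℝ),
    HasDerivWithinAt (fun t : ℝ => Real.exp (-t)) (-Real.exp (-t)) (Set.Ioi 0) t := by
  intro t _
  simpa [Function.comp_def] using ((Real.hasDerivAt_exp (-t)).comp t ((hasDerivAt_id t).neg)).hasDerivWithinAt

lemma expNegInj : Set.InjOn (fun t : ℝ => Real.exp (-t)) (Set.Ioi 0) := by
  intro a _ b _ h
  have := Real.exp_injective h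
  linarith [neg_injective this]

lemma gammaIntegrand (k : ℕ) :
    IntegrableOn (fun x : ℝ => Real.exp (-x) * x ^ k) (Set.Ioi 0) := by
  have h := Real.GammaIntegral_convergent (s := (k:ℝ) + 1) (by positivity)
  refine h.congr_fun (fun x hx => ?_) measurableSet_Ioi
  rw [add_sub_cancel_right]; simp only [Real.rpow_natCast]

lemma integrableOn_neg_log_pow (k : ℕ) :
    IntegrableOn (fun x : ℝ => (-Real.log x) ^ k) (Set.Ioo (0:ℝ) 1) := by
  rw [← expNegImage,
    integrableOn_image_iff_integrableOn_abs_deriv_smul measurableSet_Ioi expNegDeriv expNegInj]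
  refine (gammaIntegrand k).congr_fun (fun x hx => ?_) measurableSet_Ioi
  simp [abs_of_pos (Real.exp_pos (-x)), Real.log_exp]

lemma integral_neg_log_pow (k : ℕ) :
    ∫ x in Set.Ioo (0:ℝ) 1, (-Real.log x) ^ k = (Nat.factorial k : ℝ) := by
  rw [← expNegImage,
    integral_image_eq_integral_abs_deriv_smul measurableSet_Ioi expNegDeriv expNegInj]
  have h1 : Real.Gamma ((k:ℝ) + 1) = ∫ x in Set.Ioi 0, Real.exp (-x) * x ^ ((k:ℝ) + 1 - 1) :=
    Real.Gamma_eq_integral (by positivity)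
  have h2 : Real.Gamma ((k:ℝ) + 1) = (Nat.factorial k : ℝ) := Real.Gamma_nat_eq_factorial k
  rw [← h2, h1]
  refine setIntegral_congr_fun measurableSet_Ioi (fun x hx => ?_)
  rw [add_sub_cancel_right, Real.rpow_natCast]
  simp [abs_of_pos (Real.exp_pos (-x)), Real.log_exp]

lemma integrable_neg_log_pow_μ01 (k : ℕ) :
    Integrable (fun x : ℝ => (-Real.log x) ^ k) μ01 := by
  have : IntegrableOn (fun x : ℝ => (-Real.log x) ^ k) (Set.Icc (0:ℝ) 1) :=
    (integrableOn_neg_log_pow k).congr_set_ae Ioo_ae_eq_Icc.symm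
  exact this

lemma integral_neg_log_pow_μ01 (k : ℕ) :
    ∫ x, (-Real.log x) ^ k ∂μ01 = (Nat.factorial k : ℝ) := by
  rw [μ01, ← Measure.restrict_congr_set Ioo_ae_eq_Icc]
  exact integral_neg_log_pow k

lemma integrable_φ : Integrable φ μ01 := by
  have h := (integrable_neg_log_pow_μ01 1).sub (integrable_const (1:ℝ))
  convert h using 1; funext x; simp [φ]

lemma integral_φ : ∫ x, φ x ∂μ01 = 0 := by
  have hφ : φ = fun x => (-Real.log x) ^ 1 - 1 := by funext x; simp [φ]
  rw [hφ, integral_sub (integrable_neg_log_pow_μ01 1) (integrable_const 1)]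
  have h1 := integral_neg_log_pow_μ01 1
  have h2 := integral_neg_log_pow_μ01 2
  simp only [pow_one] at h1
  simp only [neg_sq] at h2
  simp [Nat.factorial] at h1 h2
  simp [h1, h2]


lemma φ_sq_eq : (fun x => φ x * φ x)
    = fun x => ((-Real.log x) ^ 2 - 2 * (-Real.log x) ^ 1) + 1 := by
  funext x; simp only [φ]; ring

lemma integrable_φ_sq : Integrable (fun x => φ x * φ x) μ01 := by
  rw [φ_sq_eq]
  exact (((integrable_neg_log_pow_μ01 2).sub
    ((integrable_neg_log_pow_μ01 1).const_mul 2))).add (integrable_const 1)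

lemma integral_φ_sq : ∫ x, φ x * φ x ∂μ01 = 1 := by
  have h12 : Integrable (fun x => (-Real.log x) ^ 2 - 2 * (-Real.log x) ^ 1) μ01 :=
    (integrable_neg_log_pow_μ01 2).sub ((integrable_neg_log_pow_μ01 1).const_mul 2)
  rw [φ_sq_eq, integral_add h12 (integrable_const 1),
    integral_sub (integrable_neg_log_pow_μ01 2) ((integrable_neg_log_pow_μ01 1).const_mul 2),
    integral_const_mul]
  have h1 := integral_neg_log_pow_μ01 1
  have h2 := integral_neg_log_pow_μ01 2
  simp only [pow_one] at h1
  simp only [neg_sq] at h2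
  simp [Nat.factorial] at h1 h2
  simp [h1, h2]


variable {μ : Measure ℝ} [IsProbabilityMeasure μ]

lemma pi_integrable_prod {n : ℕ} {f : Fin n → ℝ → ℝ} (hf : ∀ i, Integrable (f i) μ) :
    Integrable (fun x : Fin n → ℝ => ∏ i, f i (x i)) (Measure.pi fun _ => μ) := by
  induction n with
  | zero =>
      simp only [Finset.univ_eq_empty, Finset.prod_empty]
      exact integrable_const (μ := Measure.pi fun _ : Fin 0 => μ) (1 : ℝ)
  | succ n n_ih =>
      have h := ((measurePreserving_piFinSuccAbove (fun _ : Fin (n+1) => μ) 0).symm)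
      rw [← h.integrable_comp_emb (MeasurableEquiv.measurableEmbedding _)]
      simp_rw [MeasurableEquiv.piFinSuccAbove_symm_apply, Fin.insertNthEquiv,
        Fin.prod_univ_succ, Fin.insertNth_zero]
      simp only [Fin.zero_succAbove, cast_eq, Function.comp_def, Fin.cons_zero, Fin.cons_succ,
        Equiv.coe_fn_mk]
      have : Integrable (fun x : Fin n → ℝ => ∏ j, f (Fin.succ j) (x j))
          (Measure.pi fun _ => μ) := n_ih (fun i => hf _)
      exact Integrable.mul_prod (hf 0) this

lemma pi_integral_prod {n : ℕ} (f : Fin n → ℝ → ℝ) :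
    ∫ x : Fin n → ℝ, ∏ i, f i (x i) ∂(Measure.pi fun _ => μ) = ∏ i, ∫ x, f i x ∂μ := by
  induction n with
  | zero => simp
  | succ n n_ih =>
      calc
        _ = ∫ x : ℝ × (Fin n → ℝ),
            f 0 x.1 * ∏ i : Fin n, f (Fin.succ i) (x.2 i) ∂(μ.prod (Measure.pi fun _ => μ)) := by
          rw [← ((measurePreserving_piFinSuccAbove
            (fun _ : Fin (n+1) => μ) 0).symm).integral_comp']
          congr 1
          funext x
          simp [MeasurableEquiv.piFinSuccAbove_symm_apply, Fin.insertNthEquiv,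
            Fin.prod_univ_succ, Fin.insertNth_zero, Fin.zero_succAbove]
        _ = (∫ x, f 0 x ∂μ) * ∏ i : Fin n, ∫ x, f (Fin.succ i) x ∂μ := by
          rw [← n_ih, ← integral_prod_mul]
        _ = ∏ i, ∫ x, f i x ∂μ := by rw [Fin.prod_univ_succ]


section Pair
variable {n : ℕ} {g : ℝ → ℝ} (hg : Integrable g μ) (hgg : Integrable (fun x => g x * g x) μ)

lemma prod_repr_diag (i : Fin n) (x : Fin n → ℝ) :
    g (x i) * g (x i) = ∏ k, (if k = i then g (x k) * g (x k) else 1) := by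
  rw [Finset.prod_ite_eq']
  simp

lemma prod_repr_offdiag {i j : Fin n} (hij : i ≠ j) (x : Fin n → ℝ) :
    g (x i) * g (x j)
      = ∏ k, ((if k = i then g (x k) else 1) * (if k = j then g (x k) else 1)) := by
  rw [Finset.prod_mul_distrib, Finset.prod_ite_eq', Finset.prod_ite_eq']
  simp

include hgg in
lemma integrable_pair_diag (i : Fin n) :
    Integrable (fun x : Fin n → ℝ => g (x i) * g (x i)) (Measure.pi fun _ => μ) := by
  have : (fun x : Fin n → ℝ => g (x i) * g (x i))
      = fun x => ∏ k, (if k = i then g (x k) * g (x k) else 1) :=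
    funext (prod_repr_diag i)
  rw [this]
  refine pi_integrable_prod (f := fun k y => if k = i then g y * g y else 1) (fun k => ?_)
  by_cases hk : k = i <;> simp [hk, hgg]

include hg in
lemma integrable_pair_offdiag {i j : Fin n} (hij : i ≠ j) :
    Integrable (fun x : Fin n → ℝ => g (x i) * g (x j)) (Measure.pi fun _ => μ) := by
  have : (fun x : Fin n → ℝ => g (x i) * g (x j))
      = fun x => ∏ k, ((if k = i then g (x k) else 1) * (if k = j then g (x k) else 1)) :=
    funext (prod_repr_offdiag hij)
  rw [this]
  refine pi_integrable_prod
    (f := fun k y => (if k = i then g y else 1) * (if k = j then g y else 1)) (fun k => ?_)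
  by_cases hk : k = i <;> by_cases hk' : k = j <;> simp_all [hg]

lemma integral_pair_diag (i : Fin n) :
    ∫ x : Fin n → ℝ, g (x i) * g (x i) ∂(Measure.pi fun _ => μ) = ∫ x, g x * g x ∂μ := by
  have : (fun x : Fin n → ℝ => g (x i) * g (x i))
      = fun x => ∏ k, (if k = i then g (x k) * g (x k) else 1) :=
    funext (prod_repr_diag i)
  rw [this, pi_integral_prod (f := fun k y => if k = i then g y * g y else 1)]
  have h : ∀ k : Fin n, (∫ y, (if k = i then g y * g y else 1) ∂μ)
      = if k = i then ∫ y, g y * g y ∂μ else 1 := by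
    intro k; by_cases hk : k = i <;> simp [hk]
  simp_rw [h]
  rw [Finset.prod_ite_eq']
  simp

lemma integral_pair_offdiag {i j : Fin n} (hij : i ≠ j) :
    ∫ x : Fin n → ℝ, g (x i) * g (x j) ∂(Measure.pi fun _ => μ)
      = (∫ x, g x ∂μ) * (∫ x, g x ∂μ) := by
  have : (fun x : Fin n → ℝ => g (x i) * g (x j))
      = fun x => ∏ k, ((if k = i then g (x k) else 1) * (if k = j then g (x k) else 1)) :=
    funext (prod_repr_offdiag hij)
  rw [this, pi_integral_prod
    (f := fun k y => (if k = i then g y else 1) * (if k = j then g y else 1))]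
  have h : ∀ k : Fin n, (∫ y, (if k = i then g y else 1) * (if k = j then g y else 1) ∂μ)
      = (if k = i then ∫ y, g y ∂μ else 1) * (if k = j then ∫ y, g y ∂μ else 1) := by
    intro k
    by_cases hk : k = i <;> by_cases hk' : k = j <;> simp_all
  simp_rw [h]
  rw [Finset.prod_mul_distrib, Finset.prod_ite_eq', Finset.prod_ite_eq']
  simp

end Pair

variable {p : ℕ}

lemma integrable_pair (i j : Fin p) :
    Integrable (fun ξ : Fin p → ℝ => φ (ξ i) * φ (ξ j)) (Measure.pi fun _ => μ01) := by
  rcases eq_or_ne i j with rfl | hij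
  · exact integrable_pair_diag integrable_φ_sq i
  · exact integrable_pair_offdiag integrable_φ hij

lemma integral_pair (i j : Fin p) :
    ∫ ξ : Fin p → ℝ, φ (ξ i) * φ (ξ j) ∂(Measure.pi fun _ => μ01)
      = if i = j then 1 else 0 := by
  rcases eq_or_ne i j with rfl | hij
  · simpa [integral_φ_sq] using integral_pair_diag (μ := μ01) (g := φ) i
  · simp [hij, integral_pair_offdiag (μ := μ01) hij, integral_φ]

lemma integrable_Tsq :
    Integrable (fun ξ : Fin p → ℝ => (∑ i, φ (ξ i)) * (∑ j, φ (ξ j)))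
      (Measure.pi fun _ => μ01) := by
  simp_rw [Finset.sum_mul_sum]
  exact integrable_finset_sum _ (fun i _ => integrable_finset_sum _ (fun j _ =>
    integrable_pair i j))

lemma integral_Tsq :
    ∫ ξ : Fin p → ℝ, (∑ i, φ (ξ i)) * (∑ j, φ (ξ j)) ∂(Measure.pi fun _ => μ01) = p := by
  simp_rw [Finset.sum_mul_sum]
  rw [integral_finset_sum _ (fun i _ =>
    integrable_finset_sum _ (fun j _ => integrable_pair i j))]
  have : ∀ i : Fin p, ∫ ξ : Fin p → ℝ, ∑ j, φ (ξ i) * φ (ξ j) ∂(Measure.pi fun _ => μ01)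
      = ∑ j : Fin p, if i = j then (1:ℝ) else 0 := by
    intro i
    rw [integral_finset_sum _ (fun j _ => integrable_pair i j)]
    exact Finset.sum_congr rfl (fun j _ => integral_pair i j)
  simp_rw [this, Finset.sum_ite_eq, Finset.mem_univ, if_true, Finset.sum_const, Finset.card_univ,
    Fintype.card_fin, nsmul_eq_mul, mul_one]

lemma measure_B_compl :
    (Measure.pi fun _ : Fin p => μ01) (Set.univ.pi fun _ => Set.Ioc (0:ℝ) 1)ᶜ = 0 := by
  have hB : (Measure.pi fun _ : Fin p => μ01) (Set.univ.pi fun _ => Set.Ioc (0:ℝ) 1) = 1 := by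
    rw [Measure.pi_pi]
    have : μ01 (Set.Ioc (0:ℝ) 1) = 1 := by
      rw [μ01, Measure.restrict_apply measurableSet_Ioc,
        Set.inter_eq_left.mpr Set.Ioc_subset_Icc_self]
      simp [Real.volume_Ioc]
    simp [this]
  rw [measure_compl (MeasurableSet.univ_pi fun _ => measurableSet_Ioc) (by simp), hB]
  simp

lemma chebyshev (hp : 1 ≤ p) (u : ℝ) (hu : 0 < u) :
    (Measure.pi fun _ : Fin p => μ01)
      {ξ : Fin p → ℝ | (∏ i : Fin p, ξ i) ≤ Real.exp (-(p : ℝ) - Real.sqrt (u * p))}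
      ≤ ENNReal.ofReal (1 / u) := by
  have hppos : (0:ℝ) < p := by exact_mod_cast hp
  set t := Real.sqrt (u * p) with ht_def
  have ht : 0 < t := Real.sqrt_pos.2 (by positivity)
  have htt : t * t = u * p := Real.mul_self_sqrt (by positivity)
  set P := (Measure.pi fun _ : Fin p => μ01)
  set T : (Fin p → ℝ) → ℝ := fun ξ => ∑ i, φ (ξ i) with hT_def
  set A := {ξ : Fin p → ℝ | t * t ≤ T ξ * T ξ} with hA_def
  set B := Set.univ.pi fun _ : Fin p => Set.Ioc (0:ℝ) 1 with hB_def
  set E := {ξ : Fin p → ℝ | (∏ i : Fin p, ξ i) ≤ Real.exp (-(p : ℝ) - t)} with hE_def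
  -- E ∩ B ⊆ A
  have hsub : E ∩ B ⊆ A := by
    rintro ξ ⟨hE, hB⟩
    have hpos : ∀ i, 0 < ξ i := fun i => (hB i (Set.mem_univ i)).1
    have hlog : Real.log (∏ i, ξ i) = ∑ i, Real.log (ξ i) :=
      Real.log_prod (fun i _ => ne_of_gt (hpos i))
    have hE' : Real.log (∏ i, ξ i) ≤ -(p : ℝ) - t :=
      (Real.log_le_iff_le_exp (Finset.prod_pos fun i _ => hpos i)).2 hE
    have hsum : ∑ i, Real.log (ξ i) ≤ -(p : ℝ) - t := hlog ▸ hE'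
    have hT : t ≤ T ξ := by
      have : T ξ = -(∑ i, Real.log (ξ i)) - p := by
        simp only [hT_def, φ, Finset.sum_sub_distrib, Finset.sum_neg_distrib,
          Finset.sum_const, Finset.card_univ, Fintype.card_fin, nsmul_eq_mul, mul_one]
      rw [this]
      linarith
    exact mul_le_mul hT hT ht.le (le_trans ht.le hT)
  -- Markov
  have hmarkov := mul_meas_ge_le_integral_of_nonneg
    (ae_of_all P (fun ξ => mul_self_nonneg (T ξ))) integrable_Tsq (t * t)
  have hint : ∫ ξ, T ξ * T ξ ∂P = p := integral_Tsq
  rw [hint] at hmarkov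
  have hPA : (P A).toReal ≤ (p : ℝ) / (t * t) := by
    rw [le_div_iff₀ (by positivity)]
    calc (P A).toReal * (t * t) = (t * t) * (P A).toReal := by ring
    _ ≤ p := hmarkov
  have hPE : P E ≤ P A := by
    calc P E ≤ P ((E ∩ B) ∪ Bᶜ) := measure_mono (fun ξ hξ => by
          by_cases hb : ξ ∈ B
          · exact Or.inl ⟨hξ, hb⟩
          · exact Or.inr hb)
    _ ≤ P (E ∩ B) + P Bᶜ := measure_union_le _ _
    _ = P (E ∩ B) := by rw [measure_B_compl]; simp
    _ ≤ P A := measure_mono hsub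
  have hfin : P A ≠ ⊤ := measure_ne_top P A
  calc P E ≤ P A := hPE
  _ = ENNReal.ofReal (P A).toReal := (ENNReal.ofReal_toReal hfin).symm
  _ ≤ ENNReal.ofReal ((p : ℝ) / (t * t)) := ENNReal.ofReal_le_ofReal hPA
  _ = ENNReal.ofReal (1 / u) := by
      rw [htt]
      congr 1
      field_simp


set_option maxHeartbeats 1000000 in
lemma part_two {p : ℕ} (hp : 1 ≤ p) (n : ℕ) (hn : 1 ≤ n) (u : ℝ) (hu : 0 < u) :
    (∫ ξ : Fin p → ℝ, Real.exp (-(n : ℝ) * ∏ i : Fin p, ξ i)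
        ∂(Measure.pi fun _ : Fin p => μ01))
      ≤ 1 / u + (1 - 1 / u) * Real.exp (-(n : ℝ) * Real.exp (-((p : ℝ) + Real.sqrt (u * p)))) := by
  set P := (Measure.pi fun _ : Fin p => μ01)
  set a : ℝ := Real.exp (-((p : ℝ) + Real.sqrt (u * p))) with ha_def
  have ha_pos : 0 < a := Real.exp_pos _
  set c : ℝ := Real.exp (-(n : ℝ) * a) with hc_def
  have hc_pos : 0 < c := Real.exp_pos _
  have hn1 : (1:ℝ) ≤ (n:ℝ) := by exact_mod_cast hn
  have hc_le : c ≤ 1 := by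
    rw [hc_def, Real.exp_le_one_iff]
    nlinarith
  set E := {ξ : Fin p → ℝ | (∏ i : Fin p, ξ i) ≤ Real.exp (-(p : ℝ) - Real.sqrt (u * p))}
    with hE_def
  have hEeq : Real.exp (-(p : ℝ) - Real.sqrt (u * p)) = a := by rw [ha_def]; ring_nf
  set g : (Fin p → ℝ) → ℝ := fun ξ => Real.exp (-(n : ℝ) * ∏ i, ξ i) with hg_def
  have hprod_meas : Measurable fun ξ : Fin p → ℝ => ∏ i, ξ i :=
    Finset.measurable_prod _ (fun i _ => measurable_pi_apply i)
  have hg_meas : Measurable g := Real.measurable_exp.comp (hprod_meas.const_mul (-(n:ℝ)))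
  have hE_meas : MeasurableSet E := hprod_meas measurableSet_Iic
  have haeB : ∀ᵐ ξ ∂P, ξ ∈ (Set.univ.pi fun _ : Fin p => Set.Ioc (0:ℝ) 1) := by
    rw [ae_iff]
    exact measure_B_compl
  have hg_bound : ∀ᵐ ξ ∂P, ‖g ξ‖ ≤ 1 := by
    filter_upwards [haeB] with ξ hξ
    have hpos : (0:ℝ) ≤ ∏ i, ξ i :=
      Finset.prod_nonneg (fun i _ => (hξ i (Set.mem_univ i)).1.le)
    rw [Real.norm_eq_abs, abs_of_pos (Real.exp_pos _), Real.exp_le_one_iff]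
    nlinarith
  have hg_int : Integrable g P :=
    Integrable.mono' (integrable_const 1) hg_meas.aestronglyMeasurable hg_bound
  have hsplit : ∫ ξ, g ξ ∂P = (∫ ξ in E, g ξ ∂P) + ∫ ξ in Eᶜ, g ξ ∂P :=
    (integral_add_compl hE_meas hg_int).symm
  have hIE : ∫ ξ in E, g ξ ∂P ≤ (P E).toReal := by
    have := norm_setIntegral_le_of_norm_le_const_ae (μ := P) (s := E) (f := g)
      (measure_lt_top P E) (ae_restrict_of_ae hg_bound)
    calc ∫ ξ in E, g ξ ∂P ≤ ‖∫ ξ in E, g ξ ∂P‖ := le_abs_self _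
    _ ≤ 1 * (P E).toReal := this
    _ = (P E).toReal := one_mul _
  have hIEc : ∫ ξ in Eᶜ, g ξ ∂P ≤ c * (P Eᶜ).toReal := by
    have hb : ∀ ξ ∈ Eᶜ, ‖g ξ‖ ≤ c := by
      intro ξ hξ
      have : a < ∏ i, ξ i := by
        have := hξ
        simp only [hE_def, Set.mem_compl_iff, Set.mem_setOf_eq, not_le] at this
        rwa [hEeq] at this
      rw [Real.norm_eq_abs, abs_of_pos (Real.exp_pos _), hc_def, Real.exp_le_exp]
      nlinarith
    have := norm_setIntegral_le_of_norm_le_const (μ := P) (s := Eᶜ) (f := g)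
      (measure_lt_top P Eᶜ) hb
    calc ∫ ξ in Eᶜ, g ξ ∂P ≤ ‖∫ ξ in Eᶜ, g ξ ∂P‖ := le_abs_self _
    _ ≤ c * (P Eᶜ).toReal := this
  set PE := (P E).toReal with hPE_def
  have hPEc : (P Eᶜ).toReal = 1 - PE := by
    rw [prob_compl_eq_one_sub hE_meas, hPE_def,
      ENNReal.toReal_sub_of_le prob_le_one (by simp)]
    simp
  have hPE_le : PE ≤ 1 / u := by
    have h := chebyshev hp u hu
    have : (P E) ≤ ENNReal.ofReal (1 / u) := h
    calc PE ≤ (ENNReal.ofReal (1 / u)).toReal :=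
      ENNReal.toReal_mono ENNReal.ofReal_ne_top this
    _ = 1 / u := ENNReal.toReal_ofReal (by positivity)
  have hPE_nonneg : 0 ≤ PE := ENNReal.toReal_nonneg
  calc ∫ ξ, g ξ ∂P = (∫ ξ in E, g ξ ∂P) + ∫ ξ in Eᶜ, g ξ ∂P := hsplit
  _ ≤ PE + c * (1 - PE) := by rw [← hPEc]; exact add_le_add hIE hIEc
  _ ≤ 1 / u + (1 - 1 / u) * c := by nlinarith
  _ = 1 / u + (1 - 1 / u) * Real.exp (-(n : ℝ) * Real.exp (-((p : ℝ) + Real.sqrt (u * p)))) := by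
      rw [hc_def, ha_def]

lemma part_four : (1 + 4 * (Real.exp 1)⁻¹) / 5 < 1 / 2 := by
  have h := Real.exp_one_gt_d9
  have hpos : 0 < Real.exp 1 := Real.exp_pos 1
  rw [div_lt_div_iff₀ (by norm_num) (by norm_num)]
  have : (Real.exp 1)⁻¹ < 3 / 8 := by
    rw [inv_lt_iff_one_lt_mul₀ hpos]  -- maybe wrong name
    nlinarith
  nlinarith

lemma part_three {p : ℕ} (hp : 1 ≤ p) (n : ℕ) (hn : 1 ≤ n)
    (hge : Real.exp ((p : ℝ) + Real.sqrt (5 * p)) ≤ (n : ℝ)) :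
    (∫ ξ : Fin p → ℝ, Real.exp (-(n : ℝ) * ∏ i : Fin p, ξ i)
        ∂(Measure.pi fun _ : Fin p => μ01))
      ≤ (1 + 4 * (Real.exp 1)⁻¹) / 5 := by
  have h2 := part_two hp n hn 5 (by norm_num)
  set a : ℝ := Real.exp (-((p : ℝ) + Real.sqrt (5 * p))) with ha_def
  have ha_pos : 0 < a := Real.exp_pos _
  have hna : (1:ℝ) ≤ (n : ℝ) * a := by
    have : Real.exp ((p : ℝ) + Real.sqrt (5 * p)) * a = 1 := by
      rw [ha_def, ← Real.exp_add]; simp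
    nlinarith [Real.exp_pos ((p : ℝ) + Real.sqrt (5 * p))]
  have hexp : Real.exp (-(n : ℝ) * a) ≤ (Real.exp 1)⁻¹ := by
    rw [← Real.exp_neg, Real.exp_le_exp]
    linarith
  have h5 : ((5:ℕ):ℝ) = (5:ℝ) := by norm_num
  calc (∫ ξ : Fin p → ℝ, Real.exp (-(n : ℝ) * ∏ i : Fin p, ξ i)
        ∂(Measure.pi fun _ : Fin p => μ01))
      ≤ 1 / 5 + (1 - 1 / 5) * Real.exp (-(n : ℝ) * a) := h2
  _ ≤ 1 / 5 + (4 / 5) * (Real.exp 1)⁻¹ := by nlinarith [Real.exp_pos (-(n:ℝ)*a)]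
  _ = (1 + 4 * (Real.exp 1)⁻¹) / 5 := by ring


end BPRFAux

/-- **Control of the volume of a BPRF leaf.**
Let `V_p = Z₁ ⋯ Z_p` be the product of `p` i.i.d. uniform random variables on `[0,1]`
(realized on the canonical product space `Fin p → ℝ` with the product of uniform measures).
Then (i) `P(V_p ≤ exp(−p − √(up))) ≤ 1/u` for every `u > 0`;
(ii) `E[exp(−n V_p)] ≤ 1/u + (1 − 1/u) exp(−n exp(−(p + √(up))))` for every `n ≥ 1`, `u > 0`;
(iii) if `n ≥ exp(p + √(5p))` then `E[exp(−n V_p)] ≤ (1 + 4e⁻¹)/5 < 1/2`. -/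
theorem bprf_leaf_volume_control
    (p : ℕ) (hp : 1 ≤ p) :
    (∀ u : ℝ, 0 < u →
        (Measure.pi fun _ : Fin p => (volume : Measure ℝ).restrict (Set.Icc 0 1))
            {ξ : Fin p → ℝ | (∏ i : Fin p, ξ i) ≤ Real.exp (-(p : ℝ) - Real.sqrt (u * p))}
          ≤ ENNReal.ofReal (1 / u))
    ∧ (∀ n : ℕ, 1 ≤ n → ∀ u : ℝ, 0 < u →
        (∫ ξ : Fin p → ℝ, Real.exp (-(n : ℝ) * ∏ i : Fin p, ξ i)
            ∂(Measure.pi fun _ : Fin p => (volume : Measure ℝ).restrict (Set.Icc 0 1)))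
          ≤ 1 / u + (1 - 1 / u) * Real.exp (-(n : ℝ) * Real.exp (-((p : ℝ) + Real.sqrt (u * p)))))
    ∧ (∀ n : ℕ, 1 ≤ n → Real.exp ((p : ℝ) + Real.sqrt (5 * p)) ≤ (n : ℝ) →
        (∫ ξ : Fin p → ℝ, Real.exp (-(n : ℝ) * ∏ i : Fin p, ξ i)
            ∂(Measure.pi fun _ : Fin p => (volume : Measure ℝ).restrict (Set.Icc 0 1)))
          ≤ (1 + 4 * (Real.exp 1)⁻¹) / 5)
    ∧ (1 + 4 * (Real.exp 1)⁻¹) / 5 < 1 / 2 := by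
  refine ⟨?_, ?_, ?_, BPRFAux.part_four⟩
  · intro u hu
    exact BPRFAux.chebyshev hp u hu
  · intro n hn u hu
    exact BPRFAux.part_two hp n hn u hu
  · intro n hn hge
    exact BPRFAux.part_three hp n hn hge
end
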